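/- Let S be a finite semigroup that is a left regular band of groups, with idempotent-power map ω, and let x ∈ S be idempotent. For every t ∈ S with ω t ∼ x, there exists a unique s ∈ S with ω s = x and s ∼ t. (Equivalently, the support map restricted to the maximal subgroup G_x is a bijection of G_x onto the ∼-classes of elements u with ω u ∼ x, i.e. supp restricts to an isomorphism G_x ≅ G_{supp(x)}.) -/
import Mathlib


/-- The support relation `s ∼ t` on a left regular band of groups:
`(ω s)·t = s` and `(ω t)·s = t`. -/
def LRBGsim {S : Type*} [Mul S] (ω : S → S) (s t : S) : Prop :=
  ω s * t = s ∧ ω t * s = t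

section LRBGAux

variable {S : Type*} [Semigroup S]

/-- `pw s n = s^(n+1)` written via iterates. -/
private def pw (s : S) (n : ℕ) : S := (fun t => t * s)^[n] s

private lemma pw_zero (s : S) : pw s 0 = s := rfl

private lemma pw_succ (s : S) (n : ℕ) : pw s (n + 1) = pw s n * s := by
  simp [pw, Function.iterate_succ_apply']

private lemma pw_add (s : S) (m n : ℕ) : pw s m * pw s n = pw s (m + n + 1) := by
  induction n with
  | zero => rw [pw_zero, ← pw_succ]
  | succ n ih =>
      calc pw s m * pw s (n + 1) = pw s m * pw s n * s := by rw [pw_succ, mul_assoc]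
        _ = pw s (m + n + 1) * s := by rw [ih]
        _ = pw s (m + (n + 1) + 1) := by
              rw [← pw_succ, show m + n + 1 + 1 = m + (n + 1) + 1 by omega]

private lemma pw_idem {e : S} (he : e * e = e) (n : ℕ) : pw e n = e := by
  induction n with
  | zero => rfl
  | succ n ih => rw [pw_succ, ih, he]

end LRBGAux

/-- In a finite LRBG, for each idempotent `x` and each `t` with
`ω t ∼ x`, there is a unique `s` with `ω s = x` and `s ∼ t`; i.e. the support map
restricts to an isomorphism `G_x ≅ G_{supp(x)}`. -/
theorem lrbg_supp_restricts_to_group_iso {S : Type*} [Semigroup S] [Fintype S] (ω : S → S)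
    (hidem : ∀ s : S, ω s * ω s = ω s)
    (hpow : ∀ s : S, ∃ n : ℕ, ω s = (fun t => t * s)^[n] s)
    (lrbg1 : ∀ s : S, ω s * s = s)
    (lrbg2 : ∀ s t : S, s * t * ω s = s * t) :
    ∀ x : S, x * x = x → ∀ t : S, LRBGsim ω (ω t) x →
      ∃! s : S, ω s = x ∧ LRBGsim ω s t := by
  intro x hx t ht
  obtain ⟨h1, h2⟩ := ht
  -- ω of an idempotent is itself
  have hω_of_idem : ∀ e : S, e * e = e → ω e = e := by
    intro e he
    obtain ⟨n, hn⟩ := hpow e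
    rw [hn]
    exact pw_idem he n
  have hωx : ω x = x := hω_of_idem x hx
  have hωωt : ω (ω t) = ω t := hω_of_idem (ω t) (hidem t)
  have hA : ω t * x = ω t := by rw [hωωt] at h1; exact h1
  have hB : x * ω t = x := by rw [hωx] at h2; exact h2
  -- ω t is a power of t
  obtain ⟨k, hk⟩ := hpow t
  have hk' : ω t = pw t k := hk
  have hxk : x * pw t k = x := by rw [← hk']; exact hB
  have hC : ∀ r, x * pw t (k + r + 1) = x * pw t r := by
    intro r
    rw [← pw_add, ← mul_assoc, hxk]
  have hC' : ∀ j, x * pw t (j * (k + 1) + k) = x := by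
    intro j
    induction j with
    | zero => simpa using hxk
    | succ j ih =>
        rw [show (j + 1) * (k + 1) + k = k + (j * (k + 1) + k) + 1 by ring, hC, ih]
  -- absorption of x on the right of x * u
  have hxux : ∀ u : S, x * u * x = x * u := by
    intro u
    have := lrbg2 x u
    rwa [hωx] at this
  -- powers of x * t
  have hpows : ∀ j, pw (x * t) j = x * pw t j := by
    intro j
    induction j with
    | zero => rfl
    | succ j ih =>
        rw [pw_succ (x * t) j, ih, ← mul_assoc, hxux, mul_assoc, ← pw_succ]
  obtain ⟨m, hm⟩ := hpow (x * t)
  have hm' : ω (x * t) = pw (x * t) m := hm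
  have he : ω (x * t) = x * pw t m := by rw [hm', hpows]
  have heidem : (x * pw t m) * (x * pw t m) = x * pw t m := by
    have := hidem (x * t)
    rwa [he] at this
  have hpe : ∀ j, pw (x * pw t m) j = x * pw t (j * (m + 1) + m) := by
    intro j
    induction j with
    | zero => simp [pw_zero]
    | succ j ih =>
        rw [pw_succ, ih, ← mul_assoc, hxux, mul_assoc, pw_add,
          show j * (m + 1) + m + m + 1 = (j + 1) * (m + 1) + m by ring]
  -- key fact : ω (x * t) = x
  have hωs : ω (x * t) = x := by
    have h3 : x * pw t m = pw (x * pw t m) k := (pw_idem heidem k).symm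
    rw [he, h3, hpe, show k * (m + 1) + m = m * (k + 1) + k by ring, hC']
  refine ⟨x * t, ⟨hωs, ?_, ?_⟩, ?_⟩
  · rw [hωs]
  · rw [← mul_assoc, hA, lrbg1]
  · rintro s' ⟨hωs', hs1, hs2⟩
    rw [hωs'] at hs1
    exact hs1.symm
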